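/- Conversely, if Var(E[f | θ_i]) = E[Var(f | θ_{\setminus i})] for square-integrable f of independent inputs θ_i, θ_{\setminus i}, then f decomposes additively: f = g(θ_i) + h(θ_{\setminus i}) almost surely, with g(θ_i) = E[f|θ_i] and h(θ_{\setminus i}) = E[f|θ_{\setminus i}] - E[f]. -/

import Mathlib

open MeasureTheory

private lemma sobol_sq_integral_le {α : Type*} [MeasurableSpace α] (κ : Measure α)
    [IsProbabilityMeasure κ] {u : α → ℝ} (hu : MemLp u 2 κ) :
    (∫ x, u x ∂κ) ^ 2 ≤ ∫ x, (u x) ^ 2 ∂κ := by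
  have h1 := ProbabilityTheory.variance_nonneg u κ
  rw [ProbabilityTheory.variance_eq_sub hu] at h1
  simpa using h1

private lemma sobol_mul_integrable {α : Type*} [MeasurableSpace α] {κ : Measure α}
    {u v : α → ℝ} (hu : MemLp u 2 κ) (hv : MemLp v 2 κ) :
    Integrable (fun x => u x * v x) κ := by
  have h := hv.smul (𝕜 := ℝ) hu (r := 1)
    (hpqr := ⟨by rw [ENNReal.inv_two_add_inv_two, inv_one]⟩)
  rw [memLp_one_iff_integrable] at h
  exact h

/-- Converse: if the first-order Sobol numerator `Var(E[f|θ_i])` equals the total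
numerator `E[Var(f|θ_{∖i})]` for a square-integrable `f` of independent inputs
(product probability space), then `f` decomposes additively almost surely as
`f = E[f|θ_i] + (E[f|θ_{∖i}] - E[f])`. -/
theorem sobol_equality_implies_additive
    {A B : Type*} [MeasurableSpace A] [MeasurableSpace B]
    (μ : Measure A) (ν : Measure B) [IsProbabilityMeasure μ] [IsProbabilityMeasure ν]
    (f : A × B → ℝ) (hf : MemLp f 2 (μ.prod ν))
    (heq : (∫ a, (∫ b, f (a, b) ∂ν)^2 ∂μ) - (∫ a, (∫ b, f (a, b) ∂ν) ∂μ)^2 =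
      ∫ b, ((∫ a, (f (a, b))^2 ∂μ) - (∫ a, f (a, b) ∂μ)^2) ∂ν) :
    ∀ᵐ p ∂(μ.prod ν),
      f p = (∫ b, f (p.1, b) ∂ν) + ((∫ a, f (a, p.2) ∂μ) - ∫ q, f q ∂(μ.prod ν)) := by
  set g : A → ℝ := fun a => ∫ b, f (a, b) ∂ν with hg_def
  set h : B → ℝ := fun b => ∫ a, f (a, b) ∂μ with hh_def
  set m : ℝ := ∫ q, f q ∂(μ.prod ν) with hm_def
  have hfi : Integrable f (μ.prod ν) := hf.integrable one_le_two
  have hf2 : Integrable (fun p => f p ^ 2) (μ.prod ν) := hf.integrable_sq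
  have hgi : Integrable g μ := hfi.integral_prod_left
  have hhi : Integrable h ν := hfi.integral_prod_right
  -- `g` is in L²(μ)
  have hFa : Integrable (fun a => ∫ b, f (a, b) ^ 2 ∂ν) μ := hf2.integral_prod_left
  have hslice_g : ∀ᵐ a ∂μ, MemLp (fun b => f (a, b)) 2 ν := by
    filter_upwards [hf2.prod_right_ae, hf.aestronglyMeasurable.prodMk_left] with a h1 h2
    exact (memLp_two_iff_integrable_sq h2).mpr h1
  have hg_le : ∀ᵐ a ∂μ, g a ^ 2 ≤ ∫ b, f (a, b) ^ 2 ∂ν := by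
    filter_upwards [hslice_g] with a ha
    exact sobol_sq_integral_le ν ha
  have hg2 : Integrable (fun a => g a ^ 2) μ := by
    refine Integrable.mono' hFa ?_ ?_
    · exact hgi.aestronglyMeasurable.pow 2
    · filter_upwards [hg_le] with a ha
      rwa [Real.norm_eq_abs, abs_of_nonneg (sq_nonneg _)]
  have hgL2 : MemLp g 2 μ := (memLp_two_iff_integrable_sq hgi.aestronglyMeasurable).mpr hg2
  -- `h` is in L²(ν)
  have hFb : Integrable (fun b => ∫ a, f (a, b) ^ 2 ∂μ) ν := hf2.integral_prod_right
  have hslice_h : ∀ᵐ b ∂ν, MemLp (fun a => f (a, b)) 2 μ := by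
    have h2 := hf.aestronglyMeasurable.prod_swap.prodMk_left
    filter_upwards [hf2.prod_left_ae, h2] with b h1 h2
    exact (memLp_two_iff_integrable_sq h2).mpr h1
  have hh_le : ∀ᵐ b ∂ν, h b ^ 2 ≤ ∫ a, f (a, b) ^ 2 ∂μ := by
    filter_upwards [hslice_h] with b hb
    exact sobol_sq_integral_le μ hb
  have hh2 : Integrable (fun b => h b ^ 2) ν := by
    refine Integrable.mono' hFb ?_ ?_
    · exact hhi.aestronglyMeasurable.pow 2
    · filter_upwards [hh_le] with b hb
      rwa [Real.norm_eq_abs, abs_of_nonneg (sq_nonneg _)]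
  have hhL2 : MemLp h 2 ν := (memLp_two_iff_integrable_sq hhi.aestronglyMeasurable).mpr hh2
  -- lift to the product space
  have mpf : MeasurePreserving Prod.fst (μ.prod ν) μ :=
    ⟨measurable_fst, by simp⟩
  have mps : MeasurePreserving Prod.snd (μ.prod ν) ν :=
    ⟨measurable_snd, by simp⟩
  have hGp : MemLp (fun p : A × B => g p.1) 2 (μ.prod ν) := hgL2.comp_measurePreserving mpf
  have hHp : MemLp (fun p : A × B => h p.2) 2 (μ.prod ν) := hhL2.comp_measurePreserving mps
  -- integral evaluations
  have int_fst : ∀ (u : A → ℝ), Integrable u μ → ∫ p, u p.1 ∂(μ.prod ν) = ∫ a, u a ∂μ := by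
    intro u hu
    have hm : AEStronglyMeasurable u (Measure.map Prod.fst (μ.prod ν)) := by
      rw [mpf.map_eq]; exact hu.aestronglyMeasurable
    calc ∫ p, u p.1 ∂(μ.prod ν)
        = ∫ a, u a ∂(Measure.map Prod.fst (μ.prod ν)) :=
          (integral_map measurable_fst.aemeasurable hm).symm
      _ = ∫ a, u a ∂μ := by rw [mpf.map_eq]
  have int_snd : ∀ (u : B → ℝ), Integrable u ν → ∫ p, u p.2 ∂(μ.prod ν) = ∫ b, u b ∂ν := by
    intro u hu
    have hm : AEStronglyMeasurable u (Measure.map Prod.snd (μ.prod ν)) := by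
      rw [mps.map_eq]; exact hu.aestronglyMeasurable
    calc ∫ p, u p.2 ∂(μ.prod ν)
        = ∫ b, u b ∂(Measure.map Prod.snd (μ.prod ν)) :=
          (integral_map measurable_snd.aemeasurable hm).symm
      _ = ∫ b, u b ∂ν := by rw [mps.map_eq]
  have m_g : ∫ a, g a ∂μ = m := (integral_prod f hfi).symm
  have m_h : ∫ b, h b ∂ν = m := (integral_prod_symm f hfi).symm
  -- rewrite heq
  have heq' : (∫ a, g a ^ 2 ∂μ) - (∫ a, g a ∂μ) ^ 2
      = ∫ b, ((∫ a, f (a, b) ^ 2 ∂μ) - h b ^ 2) ∂ν := heq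
  have key : (∫ a, g a ^ 2 ∂μ) - m ^ 2 = (∫ p, f p ^ 2 ∂(μ.prod ν)) - ∫ b, h b ^ 2 ∂ν := by
    have h1 : ∫ b, ((∫ a, f (a, b) ^ 2 ∂μ) - h b ^ 2) ∂ν
        = (∫ b, ∫ a, f (a, b) ^ 2 ∂μ ∂ν) - ∫ b, h b ^ 2 ∂ν := integral_sub hFb hh2
    have h2 : ∫ b, ∫ a, f (a, b) ^ 2 ∂μ ∂ν = ∫ p, f p ^ 2 ∂(μ.prod ν) :=
      (integral_prod_symm _ hf2).symm
    rw [← m_g, heq', h1, h2]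
  -- integrability of all the pieces on the product
  have iG2 : Integrable (fun p : A × B => g p.1 ^ 2) (μ.prod ν) := hGp.integrable_sq
  have iH2 : Integrable (fun p : A × B => h p.2 ^ 2) (μ.prod ν) := hHp.integrable_sq
  have iGp : Integrable (fun p : A × B => g p.1) (μ.prod ν) := hGp.integrable one_le_two
  have iHp : Integrable (fun p : A × B => h p.2) (μ.prod ν) := hHp.integrable one_le_two
  have iFG : Integrable (fun p => f p * g p.1) (μ.prod ν) := sobol_mul_integrable hf hGp
  have iFH : Integrable (fun p => f p * h p.2) (μ.prod ν) := sobol_mul_integrable hf hHp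
  have iGH : Integrable (fun p : A × B => g p.1 * h p.2) (μ.prod ν) :=
    sobol_mul_integrable hGp hHp
  -- evaluate the integrals
  have e_g2 : ∫ p, g p.1 ^ 2 ∂(μ.prod ν) = ∫ a, g a ^ 2 ∂μ := int_fst _ hg2
  have e_h2 : ∫ p, h p.2 ^ 2 ∂(μ.prod ν) = ∫ b, h b ^ 2 ∂ν := int_snd _ hh2
  have e_g : ∫ p, g p.1 ∂(μ.prod ν) = m := by rw [int_fst _ hgi, m_g]
  have e_h : ∫ p, h p.2 ∂(μ.prod ν) = m := by rw [int_snd _ hhi, m_h]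
  have e_fg : ∫ p, f p * g p.1 ∂(μ.prod ν) = ∫ a, g a ^ 2 ∂μ := by
    rw [integral_prod _ iFG]
    refine integral_congr_ae (Filter.Eventually.of_forall fun a => ?_)
    show (∫ y, f (a, y) * g a ∂ν) = g a ^ 2
    have hga : (∫ y, f (a, y) ∂ν) = g a := rfl
    rw [integral_mul_const, hga, pow_two]
  have e_fh : ∫ p, f p * h p.2 ∂(μ.prod ν) = ∫ b, h b ^ 2 ∂ν := by
    rw [integral_prod_symm _ iFH]
    refine integral_congr_ae (Filter.Eventually.of_forall fun b => ?_)
    show (∫ x, f (x, b) * h b ∂μ) = h b ^ 2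
    have hhb : (∫ x, f (x, b) ∂μ) = h b := rfl
    rw [integral_mul_const, hhb, pow_two]
  have e_gh : ∫ p, g p.1 * h p.2 ∂(μ.prod ν) = m * m := by
    rw [integral_prod_mul, m_g, m_h]
  -- the remainder
  have hr : MemLp (fun p => f p - g p.1 - h p.2 + m) 2 (μ.prod ν) :=
    ((hf.sub hGp).sub hHp).add (memLp_const m)
  have hr2 : Integrable (fun p => (f p - g p.1 - h p.2 + m) ^ 2) (μ.prod ν) := hr.integrable_sq
  have expand : (fun p => (f p - g p.1 - h p.2 + m) ^ 2)
      = fun p : A × B => f p ^ 2 + g p.1 ^ 2 + h p.2 ^ 2 - 2 * (f p * g p.1)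
        - 2 * (f p * h p.2) + 2 * (g p.1 * h p.2) + 2 * m * f p - 2 * m * g p.1
        - 2 * m * h p.2 + m ^ 2 := by
    funext p; ring
  have l1 : Integrable (fun p : A × B => f p ^ 2 + g p.1 ^ 2) (μ.prod ν) := hf2.add iG2
  have l2 : Integrable (fun p : A × B => f p ^ 2 + g p.1 ^ 2 + h p.2 ^ 2) (μ.prod ν) :=
    l1.add iH2
  have l3 : Integrable (fun p : A × B => f p ^ 2 + g p.1 ^ 2 + h p.2 ^ 2
      - 2 * (f p * g p.1)) (μ.prod ν) := l2.sub (iFG.const_mul 2)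
  have l4 : Integrable (fun p : A × B => f p ^ 2 + g p.1 ^ 2 + h p.2 ^ 2
      - 2 * (f p * g p.1) - 2 * (f p * h p.2)) (μ.prod ν) := l3.sub (iFH.const_mul 2)
  have l5 : Integrable (fun p : A × B => f p ^ 2 + g p.1 ^ 2 + h p.2 ^ 2
      - 2 * (f p * g p.1) - 2 * (f p * h p.2) + 2 * (g p.1 * h p.2)) (μ.prod ν) :=
    l4.add (iGH.const_mul 2)
  have l6 : Integrable (fun p : A × B => f p ^ 2 + g p.1 ^ 2 + h p.2 ^ 2
      - 2 * (f p * g p.1) - 2 * (f p * h p.2) + 2 * (g p.1 * h p.2)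
      + 2 * m * f p) (μ.prod ν) := l5.add (hfi.const_mul (2 * m))
  have l7 : Integrable (fun p : A × B => f p ^ 2 + g p.1 ^ 2 + h p.2 ^ 2
      - 2 * (f p * g p.1) - 2 * (f p * h p.2) + 2 * (g p.1 * h p.2)
      + 2 * m * f p - 2 * m * g p.1) (μ.prod ν) := l6.sub (iGp.const_mul (2 * m))
  have l8 : Integrable (fun p : A × B => f p ^ 2 + g p.1 ^ 2 + h p.2 ^ 2
      - 2 * (f p * g p.1) - 2 * (f p * h p.2) + 2 * (g p.1 * h p.2)
      + 2 * m * f p - 2 * m * g p.1 - 2 * m * h p.2) (μ.prod ν) :=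
    l7.sub (iHp.const_mul (2 * m))
  have e_f : ∫ p, f p ∂(μ.prod ν) = m := rfl
  have hIr : ∫ p, (f p - g p.1 - h p.2 + m) ^ 2 ∂(μ.prod ν) = 0 := by
    rw [expand, integral_add l8 (integrable_const _),
      integral_sub l7 (iHp.const_mul (2 * m)),
      integral_sub l6 (iGp.const_mul (2 * m)), integral_add l5 (hfi.const_mul (2 * m)),
      integral_add l4 (iGH.const_mul 2), integral_sub l3 (iFH.const_mul 2),
      integral_sub l2 (iFG.const_mul 2), integral_add l1 iH2, integral_add hf2 iG2]
    simp only [integral_const_mul, integral_const, measure_univ, ENNReal.toReal_one, probReal_univ,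
      one_smul, smul_eq_mul]
    rw [e_g2, e_h2, e_g, e_h, e_fg, e_fh, e_gh, e_f]
    nlinarith [key]
  have hzero := (integral_eq_zero_iff_of_nonneg_ae
    (Filter.Eventually.of_forall fun p => sq_nonneg _) hr2).mp hIr
  filter_upwards [hzero] with p hp
  have hp' : (f p - g p.1 - h p.2 + m) ^ 2 = 0 := hp
  have : f p - g p.1 - h p.2 + m = 0 := by
    exact pow_eq_zero_iff two_ne_zero |>.mp hp'
  linarith
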